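/- Let E be a Banach lattice and let F be a Banach space. The set of all DW-compact operators from E to F, that is, all bounded linear operators T : E → F such that T(A) is relatively norm compact in F for every disjoint weakly compact subset A of E, is a closed linear subspace of L(E,F) with the operator norm. -/

import Mathlib

open Filter Topology Bornology Pointwise

/-- A norm bounded subset `A` of a Banach lattice `E` is disjoint weakly compact if every
disjoint sequence in `sol(A) = {x : |x| ≤ |y| for some y ∈ A}` is weakly null. -/
def IsDisjointWeaklyCompact {E : Type*} [NormedAddCommGroup E] [Lattice E] [HasSolidNorm E] [IsOrderedAddMonoid E] [NormedSpace ℝ E]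
    (A : Set E) : Prop :=
  IsBounded A ∧
    ∀ x : ℕ → E, (∀ n, ∃ y ∈ A, |x n| ≤ |y|) →
      (∀ i j, i ≠ j → |x i| ⊓ |x j| = 0) →
      ∀ f : E →L[ℝ] ℝ, Tendsto (fun n => f (x n)) atTop (nhds 0)

/-- The set of DW-compact operators from a Banach lattice `E` to a Banach space `F`,
i.e. bounded linear operators sending disjoint weakly compact subsets of `E` onto relatively
norm compact subsets of `F`. -/
def DWcompactOperators (E F : Type*) [NormedAddCommGroup E] [Lattice E] [HasSolidNorm E] [IsOrderedAddMonoid E] [NormedSpace ℝ E]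
    [NormedAddCommGroup F] [NormedSpace ℝ F] : Set (E →L[ℝ] F) :=
  {T | ∀ A : Set E, IsDisjointWeaklyCompact A → IsCompact (closure (T '' A))}

private lemma compact_closure_of_subset {F : Type*} [NormedAddCommGroup F] {K s : Set F}
    (hK : IsCompact K) (h : s ⊆ K) : IsCompact (closure s) :=
  hK.of_isClosed_subset isClosed_closure (closure_minimal h hK.isClosed)

/-- The set of DW-compact operators from a Banach lattice `E` to a Banach space `F` is a
closed linear subspace of `L(E,F)` with the operator norm. -/
theorem stmt2 (E F : Type*) [NormedAddCommGroup E] [Lattice E] [HasSolidNorm E] [IsOrderedAddMonoid E] [NormedSpace ℝ E] [CompleteSpace E]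
    [NormedAddCommGroup F] [NormedSpace ℝ F] [CompleteSpace F] :
    IsClosed (DWcompactOperators E F) ∧
      (0 : E →L[ℝ] F) ∈ DWcompactOperators E F ∧
      (∀ T₁ ∈ DWcompactOperators E F, ∀ T₂ ∈ DWcompactOperators E F,
        T₁ + T₂ ∈ DWcompactOperators E F) ∧
      (∀ (c : ℝ), ∀ T ∈ DWcompactOperators E F, c • T ∈ DWcompactOperators E F) := by
  refine ⟨?_, ?_, ?_, ?_⟩
  · -- closedness
    refine isClosed_of_closure_subset ?_
    intro T hT A hA
    refine TotallyBounded.isCompact_of_isClosed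
      (totallyBounded_closure.2 ?_) isClosed_closure
    rw [Metric.totallyBounded_iff]
    intro ε hε
    obtain ⟨C₀, hC₀⟩ := isBounded_iff_forall_norm_le.1 hA.1
    set C := max C₀ 0 with hCdef
    have hC : ∀ x ∈ A, ‖x‖ ≤ C := fun x hx => (hC₀ x hx).trans (le_max_left _ _)
    have hC1 : (0:ℝ) < C + 1 := by positivity
    obtain ⟨S, hS, hTS⟩ := Metric.mem_closure_iff.1 hT (ε / (2 * (C + 1)))
      (by positivity)
    have hStb : TotallyBounded (S '' A) :=
      (totallyBounded_closure.1 (hS A hA).totallyBounded)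
    obtain ⟨t, htfin, ht⟩ := Metric.totallyBounded_iff.1 hStb (ε / 2) (by positivity)
    refine ⟨t, htfin, ?_⟩
    rintro _ ⟨x, hx, rfl⟩
    obtain ⟨y, hy, hxy⟩ := Set.mem_iUnion₂.1 (ht ⟨x, hx, rfl⟩)
    refine Set.mem_iUnion₂.2 ⟨y, hy, ?_⟩
    have h1 : ‖T x - S x‖ ≤ ‖T - S‖ * ‖x‖ := by
      simpa using (T - S).le_opNorm x
    have h2 : ‖T - S‖ * ‖x‖ < ε / 2 := by
      have hna : ‖T - S‖ < ε / (2 * (C + 1)) := by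
        simpa [dist_eq_norm] using hTS
      have hxC : ‖x‖ ≤ C + 1 := (hC x hx).trans (by linarith)
      calc ‖T - S‖ * ‖x‖ ≤ ‖T - S‖ * (C + 1) :=
            mul_le_mul_of_nonneg_left hxC (norm_nonneg _)
        _ < (ε / (2 * (C + 1))) * (C + 1) := by
            exact mul_lt_mul_of_pos_right hna hC1
        _ = ε / 2 := by field_simp
    have : dist (T x) (S x) < ε / 2 := by
      rw [dist_eq_norm]; exact lt_of_le_of_lt h1 h2
    calc dist (T x) y ≤ dist (T x) (S x) + dist (S x) y := dist_triangle _ _ _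
      _ < ε / 2 + ε / 2 := add_lt_add this (Metric.mem_ball.1 hxy)
      _ = ε := by ring
  · -- zero
    intro A hA
    have : (0 : E →L[ℝ] F) '' A ⊆ {0} := by rintro _ ⟨x, _, rfl⟩; simp
    exact compact_closure_of_subset isCompact_singleton this
  · -- addition
    intro T₁ h₁ T₂ h₂ A hA
    have hK : IsCompact (closure (T₁ '' A) + closure (T₂ '' A)) :=
      (h₁ A hA).add (h₂ A hA)
    refine compact_closure_of_subset hK ?_
    rintro _ ⟨x, hx, rfl⟩
    exact Set.add_mem_add (subset_closure ⟨x, hx, rfl⟩) (subset_closure ⟨x, hx, rfl⟩)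
  · -- scalar multiplication
    intro c T hT A hA
    have hK : IsCompact ((fun y => c • y) '' closure (T '' A)) :=
      (hT A hA).image (continuous_const_smul c)
    refine compact_closure_of_subset hK ?_
    rintro _ ⟨x, hx, rfl⟩
    exact ⟨T x, subset_closure ⟨x, hx, rfl⟩, by simp⟩
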